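/- If Q : 𝒳 → 𝒴 satisfies ε-LIP with respect to S for every joint distribution p_{S,X} on 𝒮 × 𝒳 with full support (equivalently, for the family of all priors), then Q satisfies ε-LIP with respect to X itself: for all x, y with P(X=x) > 0 and P(Y=y) > 0, e^{-ε} ≤ P(Y=y|X=x)/P(Y=y) ≤ e^ε. -/

import Mathlib

/-- If a channel `Q` satisfies ε-LIP with respect to `S` for every finite secret space
`S` and every full-support joint distribution `p` on `S × X`, then `Q` satisfies ε-LIP
with respect to `X` itself (for any full-support prior on `X`). -/
theorem universal_lip_implies_lip_wrt_X
    {X Y : Type*} [Fintype X] [Fintype Y]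
    (Q : X → Y → ℝ) (ε : ℝ) (hε : 0 ≤ ε)
    (hQ : ∀ x y, 0 ≤ Q x y) (hQ1 : ∀ x, ∑ y, Q x y = 1)
    (h : ∀ (S : Type) [Fintype S] (p : S → X → ℝ),
      (∀ s x, 0 < p s x) → (∑ s, ∑ x, p s x) = 1 →
      ∀ (s : S) (y : Y), 0 < (∑ s', ∑ x, p s' x * Q x y) →
        Real.exp (-ε) ≤
          ((∑ x, p s x * Q x y) / (∑ x, p s x)) / (∑ s', ∑ x, p s' x * Q x y) ∧
        ((∑ x, p s x * Q x y) / (∑ x, p s x)) / (∑ s', ∑ x, p s' x * Q x y)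
          ≤ Real.exp ε) :
    ∀ (pX : X → ℝ), (∀ x, 0 < pX x) → (∑ x, pX x = 1) →
      ∀ (x : X) (y : Y), 0 < (∑ x', pX x' * Q x' y) →
        Real.exp (-ε) ≤ Q x y / (∑ x', pX x' * Q x' y) ∧
        Q x y / (∑ x', pX x' * Q x' y) ≤ Real.exp ε := by
  classical
  intro pX hpX hpX1 x y hD
  haveI : Nonempty X := ⟨x⟩
  have hn0 : 0 < (Fintype.card X : ℝ) := by
    simp only [Nat.cast_pos]; exact Fintype.card_pos
  set n : ℝ := (Fintype.card X : ℝ) with hn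
  set D := ∑ x', pX x' * Q x' y with hDdef
  set Sy := ∑ x', Q x' y with hSydef
  have hSy0 : 0 ≤ Sy := Finset.sum_nonneg fun i _ => hQ i y
  set e : Fin (Fintype.card X) ≃ X := (Fintype.equivFin X).symm with he
  -- key bounds for each δ ∈ (0,1)
  have key : ∀ δ ∈ Set.Ioo (0:ℝ) 1,
      Real.exp (-ε) ≤ ((1-δ)*Q x y + δ/n*Sy)/((1-δ)*D + δ/n*Sy) ∧
      ((1-δ)*Q x y + δ/n*Sy)/((1-δ)*D + δ/n*Sy) ≤ Real.exp ε := by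
    intro δ hδ
    obtain ⟨hδ0, hδ1⟩ := hδ
    set p : Fin (Fintype.card X) → X → ℝ :=
      fun s x' => pX (e s) * ((1-δ) * (if x' = e s then 1 else 0) + δ / n) with hp
    have hpos : ∀ s x', 0 < p s x' := by
      intro s x'
      apply mul_pos (hpX _)
      have h1 : 0 ≤ (1-δ) * (if x' = e s then (1:ℝ) else 0) := by
        apply mul_nonneg (by linarith)
        split <;> norm_num
      have h2 : 0 < δ / n := div_pos hδ0 hn0
      linarith
    have hrow : ∀ s, ∑ x', p s x' = pX (e s) := by
      intro s
      have base : ∑ x' : X, ((1-δ) * (if x' = e s then (1:ℝ) else 0) + δ / n) = 1 := by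
        rw [Finset.sum_add_distrib, ← Finset.mul_sum,
          Finset.sum_ite_eq' Finset.univ (e s) (fun _ => (1:ℝ)), Finset.sum_const,
          Finset.card_univ]
        simp only [Finset.mem_univ, if_true, nsmul_eq_mul, mul_one]
        rw [← hn]
        field_simp
        ring
      calc ∑ x', p s x'
          = pX (e s) * ∑ x' : X, ((1-δ) * (if x' = e s then (1:ℝ) else 0) + δ / n) := by
            rw [Finset.mul_sum]
        _ = pX (e s) := by rw [base, mul_one]
    have hQrow : ∀ s, ∑ x', p s x' * Q x' y
        = pX (e s) * ((1-δ) * Q (e s) y + δ/n * Sy) := by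
      intro s
      have step : ∀ x' : X, p s x' * Q x' y
          = pX (e s) * ((1-δ) * (if x' = e s then Q x' y else 0) + δ/n * Q x' y) := by
        intro x'
        simp only [hp]
        by_cases hx : x' = e s <;> simp [hx] <;> ring
      calc ∑ x', p s x' * Q x' y
          = ∑ x' : X, pX (e s) * ((1-δ) * (if x' = e s then Q x' y else 0) + δ/n * Q x' y) :=
            Finset.sum_congr rfl fun i _ => step i
        _ = pX (e s) * ∑ x' : X, ((1-δ) * (if x' = e s then Q x' y else 0) + δ/n * Q x' y) := by
            rw [Finset.mul_sum]
        _ = pX (e s) * ((1-δ) * Q (e s) y + δ/n * Sy) := by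
            rw [Finset.sum_add_distrib, ← Finset.mul_sum, ← Finset.mul_sum,
              Finset.sum_ite_eq' Finset.univ (e s) (fun x' => Q x' y)]
            simp [hSydef]
    have hsum1 : (∑ s, ∑ x', p s x') = 1 := by
      calc (∑ s, ∑ x', p s x') = ∑ s, pX (e s) :=
            Finset.sum_congr rfl fun s _ => hrow s
        _ = ∑ x', pX x' := Equiv.sum_comp e pX
        _ = 1 := hpX1
    have hT : (∑ s', ∑ x', p s' x' * Q x' y) = (1-δ)*D + δ/n*Sy := by
      calc (∑ s', ∑ x', p s' x' * Q x' y)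
          = ∑ s', pX (e s') * ((1-δ) * Q (e s') y + δ/n * Sy) :=
            Finset.sum_congr rfl fun s _ => hQrow s
        _ = ∑ x', pX x' * ((1-δ) * Q x' y + δ/n * Sy) :=
            Equiv.sum_comp e (fun x' => pX x' * ((1-δ) * Q x' y + δ/n * Sy))
        _ = ∑ x', ((1-δ) * (pX x' * Q x' y) + (δ/n * Sy) * pX x') :=
            Finset.sum_congr rfl fun i _ => by ring
        _ = (1-δ) * (∑ x', pX x' * Q x' y) + (δ/n * Sy) * (∑ x', pX x') := by
            rw [Finset.sum_add_distrib, ← Finset.mul_sum, ← Finset.mul_sum]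
        _ = (1-δ)*D + δ/n*Sy := by rw [hpX1, ← hDdef]; ring
    have hTpos : 0 < (∑ s', ∑ x', p s' x' * Q x' y) := by
      rw [hT]
      have h1 : 0 < (1-δ)*D := mul_pos (by linarith) hD
      have h2 : 0 ≤ δ/n*Sy := mul_nonneg (le_of_lt (div_pos hδ0 hn0)) hSy0
      linarith
    have H := h (Fin (Fintype.card X)) p hpos hsum1 (e.symm x) y hTpos
    have hes : e (e.symm x) = x := e.apply_symm_apply x
    rw [hQrow, hrow, hes, hT] at H
    rw [mul_div_cancel_left₀ _ (ne_of_gt (hpX x))] at H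
    exact H
  -- limit as δ → 0⁺
  haveI : (nhdsWithin (0:ℝ) (Set.Ioo 0 1)).NeBot := by
    rw [← mem_closure_iff_nhdsWithin_neBot, closure_Ioo (by norm_num : (0:ℝ) ≠ 1)]
    exact Set.mem_Icc.mpr ⟨le_refl 0, by norm_num⟩
  have htend : Filter.Tendsto (fun δ => ((1-δ)*Q x y + δ/n*Sy)/((1-δ)*D + δ/n*Sy))
      (nhdsWithin (0:ℝ) (Set.Ioo 0 1)) (nhds (Q x y / D)) := by
    have hc : ContinuousAt (fun δ : ℝ => ((1-δ)*Q x y + δ/n*Sy)/((1-δ)*D + δ/n*Sy)) 0 := by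
      apply ContinuousAt.div
      · fun_prop
      · fun_prop
      · simp [hD.ne']
    have := hc.tendsto.mono_left
      (nhdsWithin_le_nhds : nhdsWithin (0:ℝ) (Set.Ioo 0 1) ≤ nhds 0)
    simpa using this
  constructor
  · exact ge_of_tendsto htend (Filter.eventually_of_mem self_mem_nhdsWithin
      fun δ hδ => (key δ hδ).1)
  · exact le_of_tendsto htend (Filter.eventually_of_mem self_mem_nhdsWithin
      fun δ hδ => (key δ hδ).2)
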